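/- arXiv:1910.08682 — 3 statements merged into one kernel-verified Lean document; each statement's English description precedes it below -/
import Mathlib

section
/- Let $X$ be a compact Hausdorff space with a continuous action of a discrete group $\Gamma$, and consider the induced affine action of $\Gamma$ on the space $\mathrm{Prob}(X)$ of regular Borel probability measures on $X$ with the weak*-topology. If $x \in X$ is a properly proximal point for the action $\Gamma \curvearrowright X$, then the Dirac measure $\delta_x$ is a properly proximal point for the action $\Gamma \curvearrowright \mathrm{Prob}(X)$. -/
open MeasureTheory

/-- `y` is a properly proximal point for the action `act` of `Γ` on the topological
space `Y`: for every open neighborhood `O` of the diagonal, there is a finite set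
`F ⊆ Γ` with `(γ g y, γ y) ∈ O` for all `g ∈ Γ` and all `γ ∉ F`. -/
def ProperlyProximalPt {Γ Y : Type*} [TopologicalSpace Y] (act : Γ → Y → Y) (y : Y) : Prop :=
  ∀ O : Set (Y × Y), IsOpen O → (∀ z : Y, (z, z) ∈ O) →
    ∃ F : Finset Γ, ∀ g : Γ, ∀ γ : Γ, γ ∉ F → (act γ (act g y), act γ y) ∈ O

/-- If `x` is a properly proximal point for an action of `Γ` by homeomorphisms on the
compact Hausdorff space `X`, then the Dirac mass `δ_x` is a properly proximal point for
the induced action on `Prob(X)` with the weak*-topology. -/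
theorem stmt_2 {Γ X : Type*} [Group Γ] [TopologicalSpace X] [CompactSpace X] [T2Space X]
    [MeasurableSpace X] [BorelSpace X]
    (ρ : Γ → X ≃ₜ X)
    (hone : ∀ x, ρ 1 x = x) (hmul : ∀ g h x, ρ (g * h) x = ρ g (ρ h x))
    (x : X) (hx : ProperlyProximalPt (fun γ => ⇑(ρ γ)) x) :
    ProperlyProximalPt
      (fun γ (μ : ProbabilityMeasure X) =>
        μ.map ((ρ γ).continuous.measurable.aemeasurable))
      ⟨Measure.dirac x, inferInstance⟩ := by
  have hmap : ∀ (γ : Γ) (y : X),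
      (diracProba y).map ((ρ γ).continuous.measurable.aemeasurable) = diracProba (ρ γ y) := by
    intro γ y
    apply Subtype.ext
    exact Measure.map_dirac' (ρ γ).continuous.measurable y
  have hbase : (⟨Measure.dirac x, inferInstance⟩ : ProbabilityMeasure X) = diracProba x := rfl
  rw [hbase]
  intro O hO hdiag
  obtain ⟨F, hF⟩ := hx ((fun p : X × X => (diracProba p.1, diracProba p.2)) ⁻¹' O)
    (hO.preimage (continuous_diracProba.prodMap continuous_diracProba))
    (fun z => hdiag (diracProba z))
  refine ⟨F, fun g γ hγ => ?_⟩
  have := hF g γ hγ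
  simp only [Set.mem_preimage] at this
  simpa [hmap] using this
end

section
/- Let $\Gamma$ and $\Lambda$ be countable groups and $\alpha: \Gamma \times X \to \Lambda$ a measurable cocycle for a probability measure-preserving action $\Gamma \curvearrowright (X, \mu)$. Say $\alpha$ is proper if for every $\varepsilon > 0$ and every finite $F \subset \Lambda$ there is a finite $F' \subset \Gamma$ with $\mu(\{x : \alpha(\gamma, \gamma^{-1}x) \in F\}) < \varepsilon$ for all $\gamma \in \Gamma \setminus F'$. Then the Zimmer cocycle associated to a measure equivalence coupling of $\Gamma$ and $\Lambda$ is proper. -/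
open MeasureTheory
open scoped ENNReal NNReal

private lemma tail_small {ι : Type*} (f : ι → ℝ≥0∞) (hf : ∑' i, f i ≠ ⊤)
    {δ : ℝ≥0∞} (hδ : 0 < δ) :
    ∃ S : Finset ι, (∑' i : {x // x ∉ S}, f i) < δ :=
  ((ENNReal.tendsto_tsum_compl_atTop_zero hf).eventually_lt_const hδ).exists

private lemma stepB {Γ Ω : Type*} [Group Γ] [Countable Γ] [MeasurableSpace Ω] (m : Measure Ω)
    (act : Γ → Ω → Ω)
    (hone : ∀ ω, act 1 ω = ω) (hmul : ∀ g h ω, act (g * h) ω = act g (act h ω))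
    (hmp : ∀ g, MeasurePreserving (act g) m m)
    (Y : Set Ω) (hY : MeasurableSet Y)
    (hdisj : ∀ g g' : Γ, g ≠ g' → m (act g '' Y ∩ act g' '' Y) = 0)
    (hfull : m ((⋃ g : Γ, act g '' Y)ᶜ) = 0)
    (X Z : Set Ω) (hXm : MeasurableSet X) (hZm : MeasurableSet Z)
    (hXfin : m X ≠ ⊤) (hZfin : m Z ≠ ⊤)
    {δ : ℝ≥0∞} (hδ : 0 < δ) :
    ∃ F' : Finset Γ, ∀ γ : Γ, γ ∉ F' → m (X ∩ act γ⁻¹ ⁻¹' Z) < δ := by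
  classical
  have himg : ∀ (g : Γ) (S : Set Ω), act g '' S = act g⁻¹ ⁻¹' S := by
    intro g S
    ext ω
    constructor
    · rintro ⟨y, hy, rfl⟩
      have hyy : act g⁻¹ (act g y) = y := by rw [← hmul, inv_mul_cancel, hone]
      simpa [Set.mem_preimage, hyy] using hy
    · intro h
      exact ⟨act g⁻¹ ω, h, by rw [← hmul, mul_inv_cancel, hone]⟩
  set W : Γ → Set Ω := fun g => act g⁻¹ ⁻¹' Y with hWdef
  have Wmeas : ∀ g, MeasurableSet (W g) := fun g => hY.preimage (hmp g⁻¹).measurable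
  have Wdisj : ∀ g g' : Γ, g ≠ g' → m (W g ∩ W g') = 0 := by
    intro g g' h
    have := hdisj g g' h
    rwa [himg, himg] at this
  have Wfull : m ((⋃ g, W g)ᶜ) = 0 := by
    have hiu : (⋃ g : Γ, act g '' Y) = ⋃ g, W g := Set.iUnion_congr fun g => himg g Y
    rwa [hiu] at hfull
  have Wtrans : ∀ γ h : Γ, act γ⁻¹ ⁻¹' W h = W (γ * h) := by
    intro γ h
    ext ω
    simp only [hWdef, Set.mem_preimage]
    rw [← hmul, ← mul_inv_rev]
  have sum_le : ∀ A : Set Ω, MeasurableSet A → (∑' g, m (A ∩ W g)) ≤ m A := by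
    intro A hA
    have hd : Pairwise (Function.onFun (AEDisjoint m) fun g => A ∩ W g) := by
      intro g g' h
      exact measure_mono_null
        (Set.inter_subset_inter Set.inter_subset_right Set.inter_subset_right) (Wdisj g g' h)
    calc (∑' g, m (A ∩ W g)) = m (⋃ g, A ∩ W g) :=
          (measure_iUnion₀ hd fun g => (hA.inter (Wmeas g)).nullMeasurableSet).symm
      _ ≤ m A := measure_mono (Set.iUnion_subset fun g => Set.inter_subset_left)
  obtain ⟨S, hS⟩ := tail_small (fun g => m (X ∩ W g))
    ((sum_le X hXm).trans_lt (lt_top_iff_ne_top.2 hXfin)).ne (ENNReal.half_pos hδ.ne')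
  obtain ⟨T, hT⟩ := tail_small (fun h => m (Z ∩ W h))
    ((sum_le Z hZm).trans_lt (lt_top_iff_ne_top.2 hZfin)).ne (ENNReal.half_pos hδ.ne')
  refine ⟨Finset.image (fun p : Γ × Γ => p.1 * p.2⁻¹) (S ×ˢ T), fun γ hγ => ?_⟩
  have hγT : ∀ g ∈ S, γ⁻¹ * g ∉ T := by
    intro g hg hmem
    exact hγ (Finset.mem_image.2 ⟨(g, γ⁻¹ * g), Finset.mem_product.2 ⟨hg, hmem⟩, by group⟩)
  set A : Set Ω := X ∩ act γ⁻¹ ⁻¹' Z with hAdef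
  have cover : m A ≤ ∑' g, m (A ∩ W g) := by
    calc m A ≤ m ((⋃ g, A ∩ W g) ∪ (⋃ g, W g)ᶜ) := by
          refine measure_mono fun x hx => ?_
          by_cases h : x ∈ ⋃ g, W g
          · obtain ⟨g, hg⟩ := Set.mem_iUnion.1 h
            exact Or.inl (Set.mem_iUnion.2 ⟨g, hx, hg⟩)
          · exact Or.inr h
      _ ≤ m (⋃ g, A ∩ W g) + m ((⋃ g, W g)ᶜ) := measure_union_le _ _
      _ = m (⋃ g, A ∩ W g) := by rw [Wfull, add_zero]
      _ ≤ ∑' g, m (A ∩ W g) := measure_iUnion_le _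
  have per_g : ∀ g ∈ S, m (A ∩ W g) ≤ m (Z ∩ W (γ⁻¹ * g)) := by
    intro g _
    have key : A ∩ W g ⊆ (act γ⁻¹ ⁻¹' (Z ∩ W (γ⁻¹ * g))) ∪
        ((act γ⁻¹ ⁻¹' (⋃ h, W h)ᶜ) ∪ ⋃ h : {h : Γ // h ≠ γ⁻¹ * g}, (W (γ * h) ∩ W g)) := by
      rintro x ⟨⟨hxX, hxZ⟩, hxW⟩
      by_cases hcov : act γ⁻¹ x ∈ ⋃ h, W h
      · obtain ⟨h, hh⟩ := Set.mem_iUnion.1 hcov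
        by_cases heq : h = γ⁻¹ * g
        · subst heq
          exact Or.inl ⟨hxZ, hh⟩
        · refine Or.inr (Or.inr (Set.mem_iUnion.2 ⟨⟨h, heq⟩, ?_, hxW⟩))
          have hx2 : x ∈ act γ⁻¹ ⁻¹' W h := hh
          rwa [Wtrans] at hx2
      · exact Or.inr (Or.inl hcov)
    have hnull : m ((act γ⁻¹ ⁻¹' (⋃ h, W h)ᶜ) ∪
        ⋃ h : {h : Γ // h ≠ γ⁻¹ * g}, (W (γ * h) ∩ W g)) = 0 := by
      refine measure_union_null ?_ ?_
      · rw [(hmp γ⁻¹).measure_preimage (MeasurableSet.iUnion Wmeas).compl.nullMeasurableSet]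
        exact Wfull
      · refine measure_iUnion_null fun h => Wdisj _ _ ?_
        intro hc
        exact h.2 (eq_inv_mul_iff_mul_eq.2 hc)
    calc m (A ∩ W g) ≤ m ((act γ⁻¹ ⁻¹' (Z ∩ W (γ⁻¹ * g))) ∪
          ((act γ⁻¹ ⁻¹' (⋃ h, W h)ᶜ) ∪ ⋃ h : {h : Γ // h ≠ γ⁻¹ * g}, (W (γ * h) ∩ W g))) :=
            measure_mono key
      _ ≤ m (act γ⁻¹ ⁻¹' (Z ∩ W (γ⁻¹ * g))) + m ((act γ⁻¹ ⁻¹' (⋃ h, W h)ᶜ) ∪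
          ⋃ h : {h : Γ // h ≠ γ⁻¹ * g}, (W (γ * h) ∩ W g)) := measure_union_le _ _
      _ = m (act γ⁻¹ ⁻¹' (Z ∩ W (γ⁻¹ * g))) := by rw [hnull, add_zero]
      _ = m (Z ∩ W (γ⁻¹ * g)) :=
          (hmp γ⁻¹).measure_preimage (hZm.inter (Wmeas _)).nullMeasurableSet
  have hbound : ∀ g : Γ, m (A ∩ W g) ≤
      (if g ∈ S then m (Z ∩ W (γ⁻¹ * g)) else 0) + (if g ∈ S then 0 else m (X ∩ W g)) := by
    intro g
    by_cases h : g ∈ S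
    · simpa [h] using per_g g h
    · simp only [if_neg h, zero_add]
      exact measure_mono fun x hx => ⟨hx.1.1, hx.2⟩
  have conv : ∀ (f : Γ → ℝ≥0∞) (U : Finset Γ),
      (∑' i, (if i ∈ U then 0 else f i)) = ∑' i : {x // x ∉ U}, f i := by
    intro f U
    rw [show (∑' i : {x // x ∉ U}, f i) = ∑' i : ({x | x ∉ U} : Set Γ), f i from rfl,
      tsum_subtype]
    exact tsum_congr fun i => by by_cases h : i ∈ U <;> simp [Set.indicator_apply, h]
  have sum1 : (∑' g, (if g ∈ S then m (Z ∩ W (γ⁻¹ * g)) else 0)) < δ / 2 := by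
    rw [tsum_eq_sum (s := S) (fun g hg => if_neg hg)]
    have hc : ∀ g ∈ S, (if g ∈ S then m (Z ∩ W (γ⁻¹ * g)) else 0)
        = (fun h => if h ∈ T then 0 else m (Z ∩ W h)) (γ⁻¹ * g) := by
      intro g hg
      simp only [if_pos hg, if_neg (hγT g hg)]
    calc ∑ g ∈ S, (if g ∈ S then m (Z ∩ W (γ⁻¹ * g)) else 0)
        = ∑ g ∈ S, (fun h => if h ∈ T then 0 else m (Z ∩ W h)) (γ⁻¹ * g) :=
          Finset.sum_congr rfl hc
      _ = ∑ h ∈ S.image (fun g => γ⁻¹ * g), (if h ∈ T then 0 else m (Z ∩ W h)) :=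
          (Finset.sum_image (f := fun h => if h ∈ T then 0 else m (Z ∩ W h))
            (g := fun g => γ⁻¹ * g) (fun a _ b _ hab => mul_left_cancel hab)).symm
      _ ≤ ∑' h, (if h ∈ T then 0 else m (Z ∩ W h)) := ENNReal.sum_le_tsum _
      _ = ∑' h : {x // x ∉ T}, m (Z ∩ W ↑h) := conv _ T
      _ < δ / 2 := hT
  calc m A ≤ ∑' g, m (A ∩ W g) := cover
    _ ≤ ∑' g, ((if g ∈ S then m (Z ∩ W (γ⁻¹ * g)) else 0)
          + (if g ∈ S then 0 else m (X ∩ W g))) := ENNReal.tsum_le_tsum hbound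
    _ = (∑' g, (if g ∈ S then m (Z ∩ W (γ⁻¹ * g)) else 0))
          + ∑' g, (if g ∈ S then 0 else m (X ∩ W g)) := ENNReal.tsum_add
    _ < δ / 2 + δ / 2 := ENNReal.add_lt_add sum1 (by rw [conv]; exact hS)
    _ = δ := ENNReal.add_halves δ

/-- The Zimmer cocycle associated to a measure equivalence coupling is proper: for every
`ε > 0` and finite `F ⊆ Λ` there is a finite `F' ⊆ Γ` such that for all `γ ∉ F'`, the
(normalized) measure of `{x ∈ X : α(γ, γ⁻¹·x) ∈ F}` is less than `ε`, where `γ⁻¹·x`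
denotes the induced `Γ`-action on `X ≅ Ω/Λ`. -/
theorem stmt_11 {Γ Λ Ω : Type*} [Group Γ] [Countable Γ] [Group Λ] [Countable Λ]
    [MeasurableSpace Ω]
    (m : Measure Ω) [SigmaFinite m]
    (actΓ : Γ → Ω → Ω) (actΛ : Λ → Ω → Ω)
    (hΓone : ∀ ω, actΓ 1 ω = ω) (hΓmul : ∀ g h ω, actΓ (g * h) ω = actΓ g (actΓ h ω))
    (hΛone : ∀ ω, actΛ 1 ω = ω) (hΛmul : ∀ g h ω, actΛ (g * h) ω = actΛ g (actΛ h ω))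
    (hΓmp : ∀ g, MeasurePreserving (actΓ g) m m)
    (hΛmp : ∀ l, MeasurePreserving (actΛ l) m m)
    (hcomm : ∀ g l ω, actΓ g (actΛ l ω) = actΛ l (actΓ g ω))
    -- `X` is a finite-measure fundamental domain for `Λ`
    (X : Set Ω) (hX : MeasurableSet X) (hXfin : m X < ⊤) (hXpos : 0 < m X)
    (hXdisj : ∀ l l' : Λ, l ≠ l' → m (actΛ l '' X ∩ actΛ l' '' X) = 0)
    (hXfull : m ((⋃ l : Λ, actΛ l '' X)ᶜ) = 0)
    -- `Y` is a finite-measure fundamental domain for `Γ`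
    (Y : Set Ω) (hY : MeasurableSet Y) (hYfin : m Y < ⊤)
    (hYdisj : ∀ g g' : Γ, g ≠ g' → m (actΓ g '' Y ∩ actΓ g' '' Y) = 0)
    (hYfull : m ((⋃ g : Γ, actΓ g '' Y)ᶜ) = 0)
    -- the Zimmer cocycle: `α(g, ω)` brings `actΓ g ω` back into `X`
    (α : Γ → Ω → Λ)
    (hα : ∀ g : Γ, ∀ᵐ ω ∂(m.restrict X), actΛ (α g ω) (actΓ g ω) ∈ X)
    (hαmeas : ∀ (g : Γ) (l : Λ), MeasurableSet {ω | α g ω = l}) :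
    ∀ ε : ℝ, 0 < ε → ∀ F : Finset Λ, ∃ F' : Finset Γ, ∀ γ : Γ, γ ∉ F' →
      m (X ∩ {x | α γ (actΛ (α γ⁻¹ x) (actΓ γ⁻¹ x)) ∈ F}) < ENNReal.ofReal ε * m X := by
  classical
  intro ε hε F
  have himgΛ : ∀ (l : Λ) (S : Set Ω), actΛ l '' S = actΛ l⁻¹ ⁻¹' S := by
    intro l S
    ext ω
    constructor
    · rintro ⟨y, hy, rfl⟩
      have hyy : actΛ l⁻¹ (actΛ l y) = y := by rw [← hΛmul, inv_mul_cancel, hΛone]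
      simpa [Set.mem_preimage, hyy] using hy
    · intro h
      exact ⟨actΛ l⁻¹ ω, h, by rw [← hΛmul, mul_inv_cancel, hΛone]⟩
  have hnullrestrict : ∀ g : Γ, m ({ω | actΛ (α g ω) (actΓ g ω) ∉ X} ∩ X) = 0 := by
    intro g
    have h := hα g
    rw [MeasureTheory.ae_iff, Measure.restrict_apply' hX] at h
    exact h
  have stepA : ∀ (γ : Γ) (l : Λ),
      m (X ∩ {x | α γ (actΛ (α γ⁻¹ x) (actΓ γ⁻¹ x)) = l})
        ≤ m (X ∩ actΓ γ⁻¹ ⁻¹' (actΛ l⁻¹ ⁻¹' X)) := by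
    intro γ l
    set B : Set Ω := {y | actΛ (α γ y) (actΓ γ y) ∉ X} ∩ X with hBdef
    have hB0 : m B = 0 := hnullrestrict γ
    set N1 : Set Ω := {x | actΛ (α γ⁻¹ x) (actΓ γ⁻¹ x) ∉ X} ∩ X with hN1def
    have hN10 : m N1 = 0 := hnullrestrict γ⁻¹
    set N2 : Set Ω := ⋃ μ : Λ, ({x | α γ⁻¹ x = μ} ∩ (fun x => actΛ μ (actΓ γ⁻¹ x)) ⁻¹' B)
      with hN2def
    have hN20 : m N2 = 0 := by
      refine measure_iUnion_null fun μ => ?_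
      refine measure_mono_null Set.inter_subset_right ?_
      have hmp2 : MeasurePreserving (fun x => actΛ μ (actΓ γ⁻¹ x)) m m :=
        (hΛmp μ).comp (hΓmp γ⁻¹)
      rw [hmp2.measure_preimage (NullMeasurableSet.of_null hB0)]
      exact hB0
    set N3 : Set Ω := ⋃ ν : {ν : Λ // ν ≠ 1}, (X ∩ actΛ (ν : Λ) ⁻¹' X) with hN3def
    have hN30 : m N3 = 0 := by
      refine measure_iUnion_null fun ν => ?_
      have h1 : actΛ (1 : Λ) '' X = X := by
        ext ω
        simp [hΛone]
      have h2 : actΛ ((ν : Λ))⁻¹ '' X = actΛ (ν : Λ) ⁻¹' X := by rw [himgΛ, inv_inv]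
      have hne : (1 : Λ) ≠ ((ν : Λ))⁻¹ := by
        intro h
        exact ν.2 (by rw [← inv_inv (ν : Λ), ← h, inv_one])
      have hd := hXdisj 1 ((ν : Λ))⁻¹ hne
      rwa [h1, h2] at hd
    have incl : X ∩ {x | α γ (actΛ (α γ⁻¹ x) (actΓ γ⁻¹ x)) = l}
        ⊆ (X ∩ actΓ γ⁻¹ ⁻¹' (actΛ l⁻¹ ⁻¹' X)) ∪ (N1 ∪ (N2 ∪ N3)) := by
      rintro x ⟨hxX, hxα⟩
      simp only [Set.mem_setOf_eq] at hxα
      by_cases h1 : actΛ (α γ⁻¹ x) (actΓ γ⁻¹ x) ∈ X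
      · by_cases h2 : actΛ (α γ (actΛ (α γ⁻¹ x) (actΓ γ⁻¹ x)))
            (actΓ γ (actΛ (α γ⁻¹ x) (actΓ γ⁻¹ x))) ∈ X
        · have hcalc : actΓ γ (actΛ (α γ⁻¹ x) (actΓ γ⁻¹ x)) = actΛ (α γ⁻¹ x) x := by
            rw [hcomm, ← hΓmul, mul_inv_cancel, hΓone]
          rw [hxα, hcalc, ← hΛmul] at h2
          by_cases h3 : l * α γ⁻¹ x = 1
          · left
            refine ⟨hxX, ?_⟩
            have hμ : α γ⁻¹ x = l⁻¹ := (inv_eq_of_mul_eq_one_right h3).symm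
            show actΛ l⁻¹ (actΓ γ⁻¹ x) ∈ X
            rw [← hμ]
            exact h1
          · right; right; right
            exact Set.mem_iUnion.2 ⟨⟨l * α γ⁻¹ x, h3⟩, hxX, h2⟩
        · right; right; left
          exact Set.mem_iUnion.2 ⟨α γ⁻¹ x, rfl, h2, h1⟩
      · right; left
        exact ⟨h1, hxX⟩
    calc m (X ∩ {x | α γ (actΛ (α γ⁻¹ x) (actΓ γ⁻¹ x)) = l})
        ≤ m ((X ∩ actΓ γ⁻¹ ⁻¹' (actΛ l⁻¹ ⁻¹' X)) ∪ (N1 ∪ (N2 ∪ N3))) := measure_mono incl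
      _ ≤ m (X ∩ actΓ γ⁻¹ ⁻¹' (actΛ l⁻¹ ⁻¹' X)) + m (N1 ∪ (N2 ∪ N3)) := measure_union_le _ _
      _ = m (X ∩ actΓ γ⁻¹ ⁻¹' (actΛ l⁻¹ ⁻¹' X)) := by
          rw [measure_union_null hN10 (measure_union_null hN20 hN30), add_zero]
  rcases F.eq_empty_or_nonempty with hF | hFne
  · subst hF
    refine ⟨∅, fun γ _ => ?_⟩
    have hempty : (X ∩ {x | α γ (actΛ (α γ⁻¹ x) (actΓ γ⁻¹ x)) ∈ (∅ : Finset Λ)}) = ∅ := by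
      ext x
      simp
    rw [hempty, measure_empty]
    exact ENNReal.mul_pos (ENNReal.ofReal_pos.2 hε).ne' hXpos.ne'
  · set c : ℝ≥0∞ := ENNReal.ofReal ε * m X with hcdef
    have hc0 : c ≠ 0 := (ENNReal.mul_pos (ENNReal.ofReal_pos.2 hε).ne' hXpos.ne').ne'
    have hctop : c ≠ ⊤ := ENNReal.mul_ne_top ENNReal.ofReal_ne_top hXfin.ne
    set δ : ℝ≥0∞ := c / 2 / F.card with hδdef
    have hδpos : 0 < δ := ENNReal.div_pos (ENNReal.half_pos hc0).ne' (ENNReal.natCast_ne_top _)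
    have main : ∀ l : Λ, ∃ F' : Finset Γ, ∀ γ : Γ, γ ∉ F' →
        m (X ∩ {x | α γ (actΛ (α γ⁻¹ x) (actΓ γ⁻¹ x)) = l}) < δ := by
      intro l
      have hZm : MeasurableSet (actΛ l⁻¹ ⁻¹' X) := hX.preimage (hΛmp l⁻¹).measurable
      have hZfin : m (actΛ l⁻¹ ⁻¹' X) ≠ ⊤ := by
        rw [(hΛmp l⁻¹).measure_preimage hX.nullMeasurableSet]
        exact hXfin.ne
      obtain ⟨F', hF'⟩ := stepB m actΓ hΓone hΓmul hΓmp Y hY hYdisj hYfull X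
        (actΛ l⁻¹ ⁻¹' X) hX hZm hXfin.ne hZfin hδpos
      exact ⟨F', fun γ hγ => (stepA γ l).trans_lt (hF' γ hγ)⟩
    choose G hG using main
    refine ⟨F.biUnion G, fun γ hγ => ?_⟩
    have hsub : X ∩ {x | α γ (actΛ (α γ⁻¹ x) (actΓ γ⁻¹ x)) ∈ F}
        ⊆ ⋃ l ∈ F, (X ∩ {x | α γ (actΛ (α γ⁻¹ x) (actΓ γ⁻¹ x)) = l}) := by
      rintro x ⟨hxX, hxF⟩
      exact Set.mem_iUnion₂.2 ⟨_, hxF, hxX, rfl⟩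
    have hγG : ∀ l ∈ F, γ ∉ G l := fun l hl hmem => hγ (Finset.mem_biUnion.2 ⟨l, hl, hmem⟩)
    calc m (X ∩ {x | α γ (actΛ (α γ⁻¹ x) (actΓ γ⁻¹ x)) ∈ F})
        ≤ m (⋃ l ∈ F, (X ∩ {x | α γ (actΛ (α γ⁻¹ x) (actΓ γ⁻¹ x)) = l})) := measure_mono hsub
      _ ≤ ∑ l ∈ F, m (X ∩ {x | α γ (actΛ (α γ⁻¹ x) (actΓ γ⁻¹ x)) = l}) :=
          measure_biUnion_finset_le F _
      _ ≤ ∑ _l ∈ F, δ := Finset.sum_le_sum fun l hl => (hG l γ (hγG l hl)).le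
      _ = F.card * δ := by rw [Finset.sum_const, nsmul_eq_mul]
      _ = c / 2 := ENNReal.mul_div_cancel (Nat.cast_ne_zero.2 hFne.card_pos.ne')
          (ENNReal.natCast_ne_top _)
      _ < c := ENNReal.half_lt_self hc0 hctop
end

section
/- Let $E$ be the dual of a separable Banach space, $K \subset E$ a weak*-closed convex subset, and $(X, \mu)$ a probability space. Under the isometric isomorphism $L^\infty_{w^*}(X, \mu; E) \cong \mathcal{B}(L^1(X, \mu), E)$ given by $f \mapsto (g \mapsto \int g(x) f(x)\, d\mu(x))$ (weak*-valued integral), a function $f \in L^\infty_{w^*}(X, \mu; E)$ has essential range in $K$ if and only if the corresponding operator $\Xi$ satisfies $\Xi(g) \in K$ for every $g \in L^1(X, \mu)$ with $g \geq 0$ and $\|g\|_1 = 1$. -/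
open MeasureTheory Topology Filter

section A
variable {E₀ : Type*} [NormedAddCommGroup E₀] [NormedSpace ℝ E₀]

/-- Evaluation at `v` as a linear functional on the weak-* dual. -/
noncomputable def evalWDL : E₀ →ₗ[ℝ] (WeakDual ℝ E₀ →ₗ[ℝ] ℝ) where
  toFun v := { toFun := fun ξ => ξ v, map_add' := fun ξ η => rfl, map_smul' := fun c ξ => rfl }
  map_add' v w := LinearMap.ext fun ξ => map_add ξ v w
  map_smul' c v := LinearMap.ext fun ξ => map_smul ξ c v

/-- Every continuous linear functional on the weak-* dual is an evaluation. -/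
theorem exists_eval_eq (φ : WeakDual ℝ E₀ →L[ℝ] ℝ) :
    ∃ v : E₀, ∀ ξ : WeakDual ℝ E₀, φ ξ = ξ v := by
  have hb := LinearMap.hasBasis_weakBilin (topDualPairing ℝ E₀)
  have hmem : φ ⁻¹' Metric.ball (0:ℝ) 1 ∈ 𝓝 (0 : WeakDual ℝ E₀) := by
    apply φ.continuous.continuousAt.preimage_mem_nhds
    simpa using Metric.ball_mem_nhds (0:ℝ) one_pos
  obtain ⟨U, hU, hUsub⟩ := hb.mem_iff.1 hmem
  obtain ⟨s, r, hr, rfl⟩ := (SeminormFamily.basisSets_iff _).1 hU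
  have hker : ⨅ i : {y // y ∈ s}, LinearMap.ker (evalWDL (i : E₀)) ≤
      LinearMap.ker (φ : WeakDual ℝ E₀ →ₗ[ℝ] ℝ) := by
    intro x hx
    simp only [Submodule.mem_iInf, LinearMap.mem_ker] at hx ⊢
    have hx' : ∀ i ∈ s, (topDualPairing ℝ E₀).toSeminormFamily i x = 0 := by
      intro i hi
      have := hx ⟨i, hi⟩
      simp only [evalWDL, LinearMap.coe_mk, AddHom.coe_mk] at this
      show ‖x i‖ = 0
      rw [show x i = 0 from this, norm_zero]
    have hpx : (s.sup (topDualPairing ℝ E₀).toSeminormFamily) x = 0 :=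
      le_antisymm (Seminorm.finset_sup_apply_le le_rfl fun i hi => (hx' i hi).le)
        (apply_nonneg _ _)
    by_contra hφx
    have key : ∀ t : ℝ, |t| * |φ x| < 1 := by
      intro t
      have hmemb : t • x ∈ (s.sup (topDualPairing ℝ E₀).toSeminormFamily).ball 0 r := by
        refine (Seminorm.mem_ball_zero _).2 ?_
        refine lt_of_le_of_lt (Seminorm.finset_sup_apply_le le_rfl fun i hi => ?_) hr
        have h2 : x i = 0 := hx ⟨i, hi⟩
        show ‖t * x i‖ ≤ 0
        rw [h2, mul_zero, norm_zero]
      have this : dist (φ (t • x)) 0 < 1 := hUsub hmemb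
      rw [dist_zero_right, Real.norm_eq_abs] at this
      rw [φ.map_smul, smul_eq_mul, abs_mul] at this
      exact this
    have hpos : 0 < |φ x| := abs_pos.2 hφx
    have h2 := key (2 * |φ x|⁻¹)
    rw [abs_mul, abs_two, abs_inv, abs_abs, mul_assoc, inv_mul_cancel₀ hpos.ne', mul_one] at h2
    linarith
  have hspan := mem_span_of_iInf_ker_le_ker
    (L := fun i : {y // y ∈ s} => evalWDL (i : E₀)) hker
  have hrange : (φ : WeakDual ℝ E₀ →ₗ[ℝ] ℝ) ∈ LinearMap.range evalWDL := by
    refine Submodule.span_le.2 ?_ hspan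
    rintro _ ⟨i, rfl⟩
    exact ⟨(i : E₀), rfl⟩
  obtain ⟨v, hv⟩ := hrange
  exact ⟨v, fun ξ => (LinearMap.congr_fun hv ξ).symm⟩

end A

lemma abs_integral_le_abs {X : Type*} [MeasurableSpace X] {μ : Measure X} (f : X → ℝ) :
    |∫ x, f x ∂μ| ≤ ∫ x, |f x| ∂μ := by
  simpa [Real.norm_eq_abs] using norm_integral_le_integral_norm (μ := μ) f


/-- A weak*-measurable essentially bounded function `f : X → E = (E₀)*` has essential
range in a weak*-closed convex set `K` if and only if all its barycenters against
probability densities `g ∈ L¹(X, μ)₊`, `‖g‖₁ = 1`, lie in `K`. -/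
theorem stmt_12 {X E₀ : Type*} [MeasurableSpace X]
    [NormedAddCommGroup E₀] [NormedSpace ℝ E₀] [TopologicalSpace.SeparableSpace E₀]
    (μ : Measure X) [IsProbabilityMeasure μ]
    (K : Set (WeakDual ℝ E₀)) (hK : IsClosed K) (hKconv : Convex ℝ K)
    (f : X → WeakDual ℝ E₀)
    (hmeas : ∀ v : E₀, Measurable fun x => f x v)
    (C : ℝ) (hbdd : ∀ᵐ x ∂μ, ∀ v : E₀, |f x v| ≤ C * ‖v‖) :
    (∀ᵐ x ∂μ, f x ∈ K) ↔
      ∀ g : X → ℝ, Measurable g → Integrable g μ → (∀ᵐ x ∂μ, 0 ≤ g x) →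
        ∫ x, g x ∂μ = 1 →
        ∃ ξ ∈ K, ∀ v : E₀, ξ v = ∫ x, g x * f x v ∂μ := by
  set C' : ℝ := max C 0 with hC'
  have hC'0 : 0 ≤ C' := le_max_right _ _
  have hbdd' : ∀ᵐ x ∂μ, ∀ v : E₀, |f x v| ≤ C' * ‖v‖ := by
    filter_upwards [hbdd] with x hx v
    exact (hx v).trans (mul_le_mul_of_nonneg_right (le_max_left _ _) (norm_nonneg _))
  have hfvint : ∀ w : E₀, Integrable (fun x => f x w) μ := by
    intro w
    refine Integrable.mono' (integrable_const (C' * ‖w‖)) (hmeas w).aestronglyMeasurable ?_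
    filter_upwards [hbdd'] with x hx
    simpa [Real.norm_eq_abs] using hx w
  constructor
  · -- forward
    intro hmem g hgmeas hgint hgpos hgone
    have hfint : ∀ v : E₀, Integrable (fun x => g x * f x v) μ := by
      intro v
      refine Integrable.mono' (hgint.abs.mul_const (C' * ‖v‖))
        ((hgmeas.mul (hmeas v)).aestronglyMeasurable) ?_
      filter_upwards [hbdd'] with x hx
      rw [Real.norm_eq_abs, abs_mul]
      exact mul_le_mul_of_nonneg_left (hx v) (abs_nonneg _)
    set I : E₀ → ℝ := fun v => ∫ x, g x * f x v ∂μ with hI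
    have hadd : ∀ v w, I (v + w) = I v + I w := by
      intro v w
      rw [hI]
      simp only
      rw [← integral_add (hfint v) (hfint w)]
      congr 1
      funext x
      rw [map_add (f x), mul_add]
    have hsmul : ∀ (c : ℝ) (v), I (c • v) = c * I v := by
      intro c v
      rw [hI]
      simp only
      rw [← integral_const_mul]
      congr 1
      funext x
      rw [map_smul (f x), smul_eq_mul]
      ring
    have hbound : ∀ v, |I v| ≤ (C' * ∫ x, |g x| ∂μ) * ‖v‖ := by
      intro v
      have h1 : |I v| ≤ ∫ x, |g x * f x v| ∂μ := by
        rw [hI]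
        exact abs_integral_le_abs _
      have h2 : ∫ x, |g x * f x v| ∂μ ≤ ∫ x, |g x| * (C' * ‖v‖) ∂μ := by
        refine integral_mono_ae (hfint v).abs (hgint.abs.mul_const _) ?_
        filter_upwards [hbdd'] with x hx
        rw [abs_mul]
        exact mul_le_mul_of_nonneg_left (hx v) (abs_nonneg _)
      have h3 : ∫ x, |g x| * (C' * ‖v‖) ∂μ = (∫ x, |g x| ∂μ) * (C' * ‖v‖) :=
        integral_mul_const _ _
      calc |I v| ≤ (∫ x, |g x| ∂μ) * (C' * ‖v‖) := by rw [← h3]; exact h1.trans h2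
        _ = (C' * ∫ x, |g x| ∂μ) * ‖v‖ := by ring
    let ξ₀ : E₀ →ₗ[ℝ] ℝ :=
      { toFun := I, map_add' := hadd, map_smul' := fun c v => by simpa using hsmul c v }
    let ξ : WeakDual ℝ E₀ := LinearMap.mkContinuous ξ₀ (C' * ∫ x, |g x| ∂μ)
      (fun v => by rw [Real.norm_eq_abs]; exact hbound v)
    have hξv : ∀ v, ξ v = I v := fun v => rfl
    have hξK : ξ ∈ K := by
      by_contra hnot
      haveI : LocallyConvexSpace ℝ (WeakDual ℝ E₀) :=
        WeakBilin.locallyConvexSpace (B := topDualPairing ℝ E₀)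
      obtain ⟨φ, u, hφK, hφξ⟩ := geometric_hahn_banach_closed_point hKconv hK hnot
      obtain ⟨v₀, hv₀⟩ := exists_eval_eq φ
      have h1 : ∀ᵐ x ∂μ, g x * f x v₀ ≤ g x * u := by
        filter_upwards [hmem, hgpos] with x hxK hxg
        have := hφK (f x) hxK
        rw [hv₀] at this
        exact mul_le_mul_of_nonneg_left this.le hxg
      have h2 : ξ v₀ ≤ u := by
        rw [hξv v₀, hI]
        calc ∫ x, g x * f x v₀ ∂μ ≤ ∫ x, g x * u ∂μ :=
              integral_mono_ae (hfint v₀) (hgint.mul_const u) h1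
          _ = (∫ x, g x ∂μ) * u := integral_mul_const _ _
          _ = u := by rw [hgone, one_mul]
      rw [hv₀] at hφξ
      linarith
    exact ⟨ξ, hξK, fun v => hξv v⟩
  · -- converse
    intro H
    have step1 : ∀ (v : E₀) (q : ℝ),
        (∀ k ∈ K, (∀ w : E₀, |(k : WeakDual ℝ E₀) w| ≤ C' * ‖w‖) → k v < q) →
        ∀ᵐ x ∂μ, f x v < q := by
      intro v q hGood
      rw [ae_iff]
      simp only [not_lt]
      by_contra hA
      have hAmeas : MeasurableSet {x | q ≤ f x v} := measurableSet_le measurable_const (hmeas v)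
      set m : ℝ := (μ {x | q ≤ f x v}).toReal with hm
      have hmpos : 0 < m := ENNReal.toReal_pos hA (measure_ne_top μ _)
      set g : X → ℝ := {x | q ≤ f x v}.indicator (fun _ => m⁻¹) with hg
      have hgmeas : Measurable g := measurable_const.indicator hAmeas
      have hgint : Integrable g μ := (integrable_const m⁻¹).indicator hAmeas
      have hgpos : ∀ᵐ x ∂μ, 0 ≤ g x := Filter.Eventually.of_forall fun x =>
        Set.indicator_nonneg (fun _ _ => inv_nonneg.2 hmpos.le) x
      have hgone : ∫ x, g x ∂μ = 1 := by
        rw [hg, integral_indicator_const _ hAmeas, smul_eq_mul, measureReal_def, ← hm, mul_inv_cancel₀ hmpos.ne']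
      obtain ⟨ξ, hξK, hξeq⟩ := H g hgmeas hgint hgpos hgone
      have hfint : ∀ w : E₀, Integrable (fun x => g x * f x w) μ := by
        intro w
        refine Integrable.mono' (hgint.abs.mul_const (C' * ‖w‖))
          ((hgmeas.mul (hmeas w)).aestronglyMeasurable) ?_
        filter_upwards [hbdd'] with x hx
        rw [Real.norm_eq_abs, abs_mul]
        exact mul_le_mul_of_nonneg_left (hx w) (abs_nonneg _)
      have hξbdd : ∀ w : E₀, |ξ w| ≤ C' * ‖w‖ := by
        intro w
        rw [hξeq w]
        calc |∫ x, g x * f x w ∂μ| ≤ ∫ x, |g x * f x w| ∂μ := abs_integral_le_abs _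
          _ ≤ ∫ x, g x * (C' * ‖w‖) ∂μ := by
              refine integral_mono_ae (hfint w).abs (hgint.mul_const _) ?_
              filter_upwards [hbdd', hgpos] with x h1 h2
              rw [abs_mul, abs_of_nonneg h2]
              exact mul_le_mul_of_nonneg_left (h1 w) h2
          _ = (∫ x, g x ∂μ) * (C' * ‖w‖) := integral_mul_const _ _
          _ = C' * ‖w‖ := by rw [hgone, one_mul]
      have hξv : q ≤ ξ v := by
        rw [hξeq v]
        have heq : (fun x => g x * f x v) =
            fun x => {x | q ≤ f x v}.indicator (fun x => m⁻¹ * f x v) x := by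
          funext x
          rw [hg]
          exact (Set.indicator_mul_left (i := x) _ (fun _ => m⁻¹) (fun x => f x v)).symm
        rw [heq, integral_indicator hAmeas, integral_const_mul]
        have hlow : ∫ x in {x | q ≤ f x v}, q ∂μ ≤ ∫ x in {x | q ≤ f x v}, f x v ∂μ :=
          setIntegral_mono_on (integrable_const q).integrableOn (hfvint v).integrableOn hAmeas
            (fun x hx => hx)
        rw [setIntegral_const, smul_eq_mul, measureReal_def, ← hm] at hlow
        calc q = m⁻¹ * (m * q) := by field_simp
          _ ≤ m⁻¹ * ∫ x in {x | q ≤ f x v}, f x v ∂μ :=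
              mul_le_mul_of_nonneg_left hlow (inv_nonneg.2 hmpos.le)
      have := hGood ξ hξK hξbdd
      linarith
    obtain ⟨D, hDcount, hDdense⟩ := TopologicalSpace.exists_countable_dense E₀
    have step2 : ∀ᵐ x ∂μ, (∀ w : E₀, |f x w| ≤ C' * ‖w‖) ∧
        ∀ v ∈ D, ∀ q : ℚ,
          (∀ k ∈ K, (∀ w : E₀, |(k : WeakDual ℝ E₀) w| ≤ C' * ‖w‖) → k v < (q : ℝ)) →
          f x v < (q : ℝ) := by
      refine hbdd'.and ?_
      rw [ae_ball_iff hDcount]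
      intro v hv
      rw [ae_all_iff]
      intro q
      by_cases hGood : ∀ k ∈ K, (∀ w : E₀, |(k : WeakDual ℝ E₀) w| ≤ C' * ‖w‖) → k v < (q : ℝ)
      · filter_upwards [step1 v q hGood] with x hx _
        exact hx
      · exact Filter.Eventually.of_forall fun x hx => absurd hx hGood
    filter_upwards [step2] with x hx
    obtain ⟨hxb, hx2⟩ := hx
    by_contra hxK
    set Kb : Set (WeakDual ℝ E₀) := {k | ∀ w : E₀, |k w| ≤ C' * ‖w‖} with hKb
    have hKbclosed : IsClosed Kb := by
      have : Kb = ⋂ w : E₀, {k : WeakDual ℝ E₀ | |k w| ≤ C' * ‖w‖} := by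
        ext k; simp [hKb, Set.mem_iInter]
      rw [this]
      exact isClosed_iInter fun w =>
        isClosed_le ((WeakDual.eval_continuous w).abs) continuous_const
    have hKbconv : Convex ℝ Kb := by
      intro k1 h1 k2 h2 a b ha hb hab
      intro w
      have happ : (a • k1 + b • k2) w = a * k1 w + b * k2 w := rfl
      rw [happ]
      calc |a * k1 w + b * k2 w| ≤ |a * k1 w| + |b * k2 w| := abs_add_le _ _
        _ = a * |k1 w| + b * |k2 w| := by rw [abs_mul, abs_mul, abs_of_nonneg ha, abs_of_nonneg hb]
        _ ≤ a * (C' * ‖w‖) + b * (C' * ‖w‖) := by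
            gcongr
            exacts [h1 w, h2 w]
        _ = C' * ‖w‖ := by rw [← add_mul, hab, one_mul]
    have hK'closed : IsClosed (K ∩ Kb) := hK.inter hKbclosed
    have hK'conv : Convex ℝ (K ∩ Kb) := hKconv.inter hKbconv
    have hξnot : f x ∉ K ∩ Kb := fun h => hxK h.1
    haveI : LocallyConvexSpace ℝ (WeakDual ℝ E₀) :=
      WeakBilin.locallyConvexSpace (B := topDualPairing ℝ E₀)
    obtain ⟨φ, u, hφK, hφξ⟩ := geometric_hahn_banach_closed_point hK'conv hK'closed hξnot
    obtain ⟨v₁, hv₁⟩ := exists_eval_eq φ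
    rw [hv₁] at hφξ
    obtain ⟨q, hq1, hq2⟩ := exists_rat_btwn hφξ
    set ε : ℝ := min ((q : ℝ) - u) (f x v₁ - q) with hε
    have hεpos : 0 < ε := lt_min (by linarith) (by linarith)
    obtain ⟨v, hvD, hvdist⟩ := Metric.mem_closure_iff.1 (hDdense v₁) (ε / (C' + 1))
      (div_pos hεpos (by linarith))
    have hnorm : ‖v - v₁‖ < ε / (C' + 1) := by
      rw [← dist_eq_norm, dist_comm]
      exact hvdist
    have hCn : C' * ‖v - v₁‖ < ε := by
      have h1 : C' * ‖v - v₁‖ ≤ C' * (ε / (C' + 1)) :=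
        mul_le_mul_of_nonneg_left hnorm.le hC'0
      have h2 : C' * (ε / (C' + 1)) < ε := by
        rw [mul_div_assoc']
        rw [div_lt_iff₀ (by linarith : (0:ℝ) < C' + 1)]
        nlinarith
      linarith
    have hGood : ∀ k ∈ K, (∀ w : E₀, |(k : WeakDual ℝ E₀) w| ≤ C' * ‖w‖) → k v < (q : ℝ) := by
      intro k hk hkb
      have hkv₁ : k v₁ < u := by
        have := hφK k ⟨hk, hkb⟩
        rwa [hv₁] at this
      have hdiff : |k v - k v₁| ≤ C' * ‖v - v₁‖ := by
        have : k v - k v₁ = k (v - v₁) := (map_sub k v v₁).symm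
        rw [this]
        exact hkb (v - v₁)
      have := abs_le.1 hdiff
      have hεle : ε ≤ (q : ℝ) - u := min_le_left _ _
      linarith
    have hcontra := hx2 v hvD q hGood
    have hdiff : |f x v - f x v₁| ≤ C' * ‖v - v₁‖ := by
      have : f x v - f x v₁ = f x (v - v₁) := (map_sub (f x) v v₁).symm
      rw [this]
      exact hxb (v - v₁)
    have := abs_le.1 hdiff
    have hεle : ε ≤ f x v₁ - q := min_le_right _ _
    linarith
end
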